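/- Let k ≥ 1 and d ≥ 0. The number of Replacement-Eggs outcome words of horizon d — namely binary words w of some length ℓ ≤ d such that either (a) ℓ = d and w does not contain k consecutive 0's, or (b) k ≤ ℓ ≤ d, the last k letters of w are all 0, and the prefix of w of length ℓ − 1 does not contain k consecutive 0's — equals ∑_{i=0}^{⌊d/(k+1)⌋} (−1)^i · C(d − i·k, i) · 2^{d − i(k+1)}. Consequently, the egg-drop number for Replacement Eggs starting with k eggs and at most d drops is H_{R,k}(d) = −1 + ∑_{i=0}^{⌊d/(k+1)⌋} (−1)^i · C(d − i·k, i) · 2^{d − i(k+1)}. -/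

import Mathlib

/-- `w` contains `k` consecutive `0`'s (`false`s). -/
def HasKConsecZeros (k : ℕ) {n : ℕ} (w : Fin n → Bool) : Prop :=
  ∃ j : ℕ, j + k ≤ n ∧ ∀ i : Fin n, j ≤ (i : ℕ) → (i : ℕ) < j + k → w i = false

/-- The prefix of length `m ≤ n` of a word of length `n`. -/
def wordPrefix {n : ℕ} (w : Fin n → Bool) (m : ℕ) (h : m ≤ n) : Fin m → Bool :=
  fun i => w ⟨(i : ℕ), lt_of_lt_of_le i.isLt h⟩

/-- `p = ⟨ℓ, w⟩` is a Replacement-Eggs outcome word of horizon `d` with `k` starting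
eggs: either `ℓ = d` and `w` lacks `k` consecutive zeros, or `k ≤ ℓ ≤ d`, the last
`k` letters of `w` are all `0`, and the prefix of length `ℓ - 1` lacks `k`
consecutive zeros. -/
def ReplacementOutcome (k d : ℕ) (p : Σ ℓ : ℕ, Fin ℓ → Bool) : Prop :=
  (p.1 = d ∧ ¬ HasKConsecZeros k p.2) ∨
  (k ≤ p.1 ∧ p.1 ≤ d ∧
    (∀ i : Fin p.1, p.1 ≤ (i : ℕ) + k → p.2 i = false) ∧
    ¬ HasKConsecZeros k (wordPrefix p.2 (p.1 - 1) (Nat.sub_le _ _)))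

namespace RepEggs

noncomputable def A (k n : ℕ) : ℕ := Nat.card {w : Fin n → Bool // ¬ HasKConsecZeros k w}

noncomputable def Cc (k m : ℕ) : ℕ :=
  Nat.card {u : Fin m → Bool // ¬ HasKConsecZeros k u ∧
    ∀ i : Fin m, m < (i : ℕ) + k → u i = false}

noncomputable def N (k d : ℕ) : ℕ :=
  Nat.card {p : Σ ℓ : ℕ, Fin ℓ → Bool // ReplacementOutcome k d p}

lemma prefix_noK {k n m : ℕ} (hm : m ≤ n) {w : Fin n → Bool}
    (hw : ¬ HasKConsecZeros k w) : ¬ HasKConsecZeros k (wordPrefix w m hm) := by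
  rintro ⟨j, hj, hv⟩
  refine hw ⟨j, by omega, fun i hi1 hi2 => ?_⟩
  have := hv ⟨i, by omega⟩ (by simpa) (by simpa)
  simpa [wordPrefix] using this

lemma A_small {k n : ℕ} (h : n < k) : A k n = 2 ^ n := by
  have : ∀ w : Fin n → Bool, ¬ HasKConsecZeros k w := by
    rintro w ⟨j, hj, -⟩; omega
  rw [A, Nat.card_congr (Equiv.subtypeUnivEquiv this)]
  simp [Nat.card_eq_fintype_card]

lemma A_at_k (k : ℕ) : A k k = 2 ^ k - 1 := by
  classical
  have hone : Nat.card {w : Fin k → Bool // HasKConsecZeros k w} = 1 := by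
    rw [Nat.card_eq_one_iff_unique]
    constructor
    · constructor
      rintro ⟨w, j, hj, hw⟩ ⟨v, j', hj', hv⟩
      have hj0 : j = 0 := by omega
      have hj0' : j' = 0 := by omega
      subst hj0; subst hj0'
      ext i
      · simp only
        rw [hw i (by omega) (by omega), hv i (by omega) (by omega)]
    · exact ⟨⟨fun _ => false, 0, by omega, fun i _ _ => rfl⟩⟩
  have h2 : Nat.card {w : Fin k → Bool // ¬ HasKConsecZeros k w}
      + Nat.card {w : Fin k → Bool // HasKConsecZeros k w}
      = 2 ^ k := by
    rw [Nat.card_eq_fintype_card, Nat.card_eq_fintype_card]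
    rw [Fintype.card_subtype_compl]
    have hle : Fintype.card {w : Fin k → Bool // HasKConsecZeros k w}
        ≤ Fintype.card (Fin k → Bool) := Fintype.card_subtype_le _
    simp only [Fintype.card_fun, Fintype.card_bool, Fintype.card_fin] at *
    omega
  rw [A]
  omega

lemma Cc_small {k m : ℕ} (h : m < k) : Cc k m = 1 := by
  rw [Cc, Nat.card_eq_one_iff_unique]
  constructor
  · constructor
    rintro ⟨u, -, hu⟩ ⟨v, -, hv⟩
    ext i
    simp only
    rw [hu i (by omega), hv i (by omega)]
  · refine ⟨⟨fun _ => false, ?_, fun _ _ => rfl⟩⟩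
    rintro ⟨j, hj, -⟩; omega


lemma Cc_large {k m : ℕ} (hk : 1 ≤ k) (h : k ≤ m) : Cc k m = A k (m - k) := by
  classical
  rw [Cc, A]
  apply Nat.card_congr
  have key : ∀ u : Fin m → Bool, ¬ HasKConsecZeros k u →
      (∀ i : Fin m, m < (i : ℕ) + k → u i = false) → u ⟨m - k, by omega⟩ = true := by
    intro u h1 h2
    by_contra hb
    apply h1
    refine ⟨m - k, by omega, fun i hi1 hi2 => ?_⟩
    rcases eq_or_lt_of_le hi1 with he | hlt
    · have hi : i = (⟨m - k, by omega⟩ : Fin m) := Fin.ext he.symm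
      rw [hi]; simpa using hb
    · exact h2 i (by omega)
  refine Equiv.ofBijective
    (fun u => ⟨wordPrefix u.1 (m - k) (Nat.sub_le m k), prefix_noK _ u.2.1⟩) ⟨?_, ?_⟩
  · rintro ⟨u, hu1, hu2⟩ ⟨v, hv1, hv2⟩ he
    have hpre : wordPrefix u (m - k) (Nat.sub_le m k) = wordPrefix v (m - k) (Nat.sub_le m k) := by
      simpa using congrArg Subtype.val he
    apply Subtype.ext; funext i; show u i = v i
    rcases lt_trichotomy (i : ℕ) (m - k) with hi | hi | hi
    · have := congrFun hpre ⟨i, hi⟩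
      simpa [wordPrefix] using this
    · have h1 := key u hu1 hu2
      have h2 := key v hv1 hv2
      have hieq : i = (⟨m - k, by omega⟩ : Fin m) := Fin.ext hi
      rw [hieq, h1, h2]
    · rw [hu2 i (by omega), hv2 i (by omega)]
  · rintro ⟨v, hv⟩
    refine ⟨⟨fun i => if h' : (i : ℕ) < m - k then v ⟨i, h'⟩ else decide ((i : ℕ) = m - k),
        ?_, ?_⟩, ?_⟩
    · rintro ⟨j, hj, hw⟩
      by_cases hcase : j + k ≤ m - k
      · apply hv
        refine ⟨j, hcase, fun i hi1 hi2 => ?_⟩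
        have := hw ⟨i, by omega⟩ (by simpa) (by simpa)
        simpa [show (i:ℕ) < m - k by omega] using this
      · have hjle : j ≤ m - k := by omega
        have := hw ⟨m - k, by omega⟩ (by simpa) (by simpa using by omega)
        simp at this
    · intro i hi
      have h1 : ¬ (i : ℕ) < m - k := by omega
      have h2 : (i : ℕ) ≠ m - k := by omega
      simp [h1, h2]
    · ext i
      simp [wordPrefix, i.isLt]



lemma A_rec {k d : ℕ} (hk : 1 ≤ k) (hd : k ≤ d) : A k (d + 1) + Cc k d = 2 * A k d := by
  classical
  have e : ({w : Fin (d+1) → Bool // ¬ HasKConsecZeros k w} ⊕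
      {u : Fin d → Bool // ¬ HasKConsecZeros k u ∧
        ∀ i : Fin d, d < (i : ℕ) + k → u i = false})
      ≃ Bool × {u : Fin d → Bool // ¬ HasKConsecZeros k u} := by
    refine Equiv.ofBijective (fun x => Sum.rec
      (fun w => (w.1 ⟨d, by omega⟩, ⟨wordPrefix w.1 d (by omega), prefix_noK _ w.2⟩))
      (fun u => (false, ⟨u.1, u.2.1⟩)) x) ⟨?_, ?_⟩
    · -- helper: a noK word of length d+1 whose last letter is false cannot have
      -- its prefix ending in k-1 zeros
      have cross : ∀ (w : Fin (d+1) → Bool), ¬ HasKConsecZeros k w →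
          w ⟨d, by omega⟩ = false →
          ¬ (∀ i : Fin d, d < (i : ℕ) + k → wordPrefix w d (by omega) i = false) := by
        intro w hw hlast hE
        apply hw
        refine ⟨d + 1 - k, by omega, fun i hi1 hi2 => ?_⟩
        rcases lt_or_eq_of_le (Nat.lt_succ_iff.mp i.isLt) with hi | hi
        · have := hE ⟨i, hi⟩ (by simp only [Fin.val_mk]; omega)
          simpa [wordPrefix] using this
        · have : i = (⟨d, by omega⟩ : Fin (d+1)) := Fin.ext hi
          rw [this, hlast]
      rintro (⟨w, hw⟩ | ⟨u, hu1, hu2⟩) (⟨w', hw'⟩ | ⟨u', hu1', hu2'⟩) he <;>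
        simp only [Prod.mk.injEq, Subtype.mk.injEq] at he
      · congr 1
        apply Subtype.ext; funext i; show w i = w' i
        rcases lt_or_eq_of_le (Nat.lt_succ_iff.mp i.isLt) with hi | hi
        · have := congrFun he.2 ⟨i, hi⟩
          simpa [wordPrefix] using this
        · have hieq : i = (⟨d, by omega⟩ : Fin (d+1)) := Fin.ext hi
          rw [hieq]; exact he.1
      · exfalso
        apply cross w hw he.1
        intro i hi
        rw [he.2]
        exact hu2' i hi
      · exfalso
        apply cross w' hw' he.1.symm
        intro i hi
        rw [← he.2]
        exact hu2 i hi
      · exact congrArg Sum.inr (Subtype.ext he.2)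
    · rintro ⟨b, u, hu⟩
      by_cases hcase : b = false ∧ ∀ i : Fin d, d < (i : ℕ) + k → u i = false
      · refine ⟨Sum.inr ⟨u, hu, hcase.2⟩, ?_⟩
        simp [hcase.1]
      · -- use the extension
        set w : Fin (d+1) → Bool := fun i => if h : (i : ℕ) < d then u ⟨i, h⟩ else b with hwdef
        have hwno : ¬ HasKConsecZeros k w := by
          rintro ⟨j, hj, hjw⟩
          by_cases hj2 : j + k ≤ d
          · apply hu
            refine ⟨j, hj2, fun i hi1 hi2 => ?_⟩
            have := hjw ⟨i, by omega⟩ (by simpa) (by simpa)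
            simpa [hwdef, i.isLt] using this
          · apply hcase
            constructor
            · have := hjw ⟨d, by omega⟩ (by simpa using by omega) (by simpa using by omega)
              simpa [hwdef] using this
            · intro i hi
              have := hjw ⟨i, by omega⟩ (by simpa using by omega) (by simpa using by omega)
              simpa [hwdef, i.isLt] using this
        refine ⟨Sum.inl ⟨w, hwno⟩, ?_⟩
        simp only [Prod.mk.injEq, Subtype.mk.injEq]
        constructor
        · simp [hwdef]
        · funext i
          simp [wordPrefix, hwdef, i.isLt]
  have hcard := Nat.card_congr e
  rw [Nat.card_sum, Nat.card_prod, Nat.card_eq_fintype_card (α := Bool)] at hcard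
  simpa [A, Cc, two_mul] using hcard


lemma sum_pow_two (n : ℕ) : ∑ j ∈ Finset.range n, 2 ^ j = 2 ^ n - 1 := by
  induction n with
  | zero => simp
  | succ n ih =>
      rw [Finset.sum_range_succ, ih, pow_succ]
      have := Nat.one_le_two_pow (n := n)
      omega

lemma A_sum_small {k m : ℕ} (hm : m < k) :
    A k m = 1 + ∑ j ∈ Finset.range m, A k j := by
  rw [A_small hm, Finset.sum_congr rfl
    (fun j hj => A_small (lt_trans (Finset.mem_range.mp hj) hm)),
    sum_pow_two]
  have := Nat.one_le_two_pow (n := m)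
  omega

lemma A_ksum {k : ℕ} (hk : 1 ≤ k) {m : ℕ} (hm : k ≤ m) :
    A k m = ∑ j ∈ Finset.Ico (m - k) m, A k j := by
  induction m, hm using Nat.le_induction with
  | base =>
      rw [A_at_k, show k - k = 0 by omega,
        show Finset.Ico 0 k = Finset.range k from (Finset.range_eq_Ico k).symm,
        Finset.sum_congr rfl (fun j hj => A_small (Finset.mem_range.mp hj)), sum_pow_two]
  | succ m hm ih =>
      have hrec := A_rec hk hm
      have hC : Cc k m = A k (m - k) := Cc_large hk hm
      have h1 : ∑ j ∈ Finset.Ico (m - k) m, A k j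
          = A k (m - k) + ∑ j ∈ Finset.Ico (m - k + 1) m, A k j :=
        Finset.sum_eq_sum_Ico_succ_bot (by omega) _
      have h2 : ∑ j ∈ Finset.Ico (m + 1 - k) (m + 1), A k j
          = (∑ j ∈ Finset.Ico (m - k + 1) m, A k j) + A k m := by
        rw [show m + 1 - k = m - k + 1 by omega, Finset.sum_Ico_succ_top (by omega)]
      omega


lemma card_at {k d ℓ : ℕ} (hk : 1 ≤ k) (hℓ : ℓ ≤ d) :
    Nat.card {w : Fin ℓ → Bool // ReplacementOutcome k d ⟨ℓ, w⟩} =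
      (if ℓ = d then A k d else 0) + (if k ≤ ℓ then Cc k (ℓ - 1) else 0) := by
  classical
  set Pa : (Fin ℓ → Bool) → Prop := fun w => ℓ = d ∧ ¬ HasKConsecZeros k w with hPa
  set Pb : (Fin ℓ → Bool) → Prop := fun w => k ≤ ℓ ∧ ℓ ≤ d ∧
    (∀ i : Fin ℓ, ℓ ≤ (i : ℕ) + k → w i = false) ∧
    ¬ HasKConsecZeros k (wordPrefix w (ℓ - 1) (Nat.sub_le _ _)) with hPb
  have hiff : ∀ w : Fin ℓ → Bool, ReplacementOutcome k d ⟨ℓ, w⟩ ↔ (Pa w ∨ Pb w) :=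
    fun w => Iff.rfl
  have hdisj : Disjoint Pa Pb := by
    rw [disjoint_iff_inf_le]
    intro w hw
    obtain ⟨⟨h1, h2⟩, h3, h4, h5, h6⟩ := hw
    exact h2 ⟨ℓ - k, by omega, fun i hi1 hi2 => h5 i (by omega)⟩
  have hA : Nat.card {w : Fin ℓ → Bool // Pa w} = if ℓ = d then A k d else 0 := by
    by_cases hd : ℓ = d
    · subst hd
      rw [if_pos rfl, A]
      exact Nat.card_congr (Equiv.subtypeEquivRight (fun w => by simp [hPa]))
    · rw [if_neg hd]
      have : IsEmpty {w : Fin ℓ → Bool // Pa w} := ⟨fun w => hd w.2.1⟩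
      exact Nat.card_of_isEmpty
  have hB : Nat.card {w : Fin ℓ → Bool // Pb w} = if k ≤ ℓ then Cc k (ℓ - 1) else 0 := by
    by_cases hkl : k ≤ ℓ
    · rw [if_pos hkl, Cc]
      apply Nat.card_congr
      refine Equiv.ofBijective (fun w => ⟨wordPrefix w.1 (ℓ - 1) (Nat.sub_le _ _),
        w.2.2.2.2, fun i hi => w.2.2.2.1 ⟨(i : ℕ), by omega⟩ (show ℓ ≤ (i : ℕ) + k by omega)⟩)
        ⟨?_, ?_⟩
      · rintro ⟨w, hw1, hw2, hw3, hw4⟩ ⟨v, hv1, hv2, hv3, hv4⟩ he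
        have hpre : wordPrefix w (ℓ - 1) (Nat.sub_le _ _)
            = wordPrefix v (ℓ - 1) (Nat.sub_le _ _) := by
          simpa using congrArg Subtype.val he
        apply Subtype.ext; funext i; show w i = v i
        rcases lt_or_eq_of_le (Nat.lt_succ_iff.mp (show (i:ℕ) < (ℓ-1) + 1 by omega)) with hi | hi
        · have := congrFun hpre ⟨i, hi⟩
          simpa [wordPrefix] using this
        · rw [hw3 i (by omega), hv3 i (by omega)]
      · rintro ⟨u, hu1, hu2⟩
        set w : Fin ℓ → Bool := fun i => if h : (i : ℕ) < ℓ - 1 then u ⟨i, h⟩ else false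
          with hwdef
        have hpre : wordPrefix w (ℓ - 1) (Nat.sub_le _ _) = u := by
          funext i
          simp [wordPrefix, hwdef, i.isLt]
        refine ⟨⟨w, hkl, hℓ, ?_, ?_⟩, Subtype.ext hpre⟩
        · intro i hi
          by_cases hc : (i : ℕ) < ℓ - 1
          · have := hu2 ⟨(i : ℕ), hc⟩ (show ℓ - 1 < (i : ℕ) + k by omega)
            simpa [hwdef, hc] using this
          · simp [hwdef, hc]
        · rw [hpre]; exact hu1
    · rw [if_neg hkl]
      have : IsEmpty {w : Fin ℓ → Bool // Pb w} := ⟨fun w => hkl w.2.1⟩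
      exact Nat.card_of_isEmpty
  rw [Nat.card_congr (Equiv.subtypeEquivRight hiff),
    Nat.card_congr (subtypeOrEquiv Pa Pb hdisj), Nat.card_sum, hA, hB]

lemma N_eq {k d : ℕ} (hk : 1 ≤ k) :
    N k d = A k d + ∑ ℓ ∈ Finset.Ico k (d + 1), Cc k (ℓ - 1) := by
  classical
  have hbound : ∀ p : Σ ℓ : ℕ, Fin ℓ → Bool, ReplacementOutcome k d p → p.1 < d + 1 := by
    rintro ⟨ℓ, w⟩ (⟨rfl, -⟩ | ⟨-, h, -⟩) <;> omega
  let e1 : {p : Σ ℓ : ℕ, Fin ℓ → Bool // ReplacementOutcome k d p} ≃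
      Σ ℓ : Fin (d + 1), {w : Fin (ℓ : ℕ) → Bool // ReplacementOutcome k d ⟨(ℓ : ℕ), w⟩} :=
    { toFun := fun p => ⟨⟨p.1.1, hbound p.1 p.2⟩,
        ⟨p.1.2, by rcases p with ⟨⟨ℓ, w⟩, hp⟩; exact hp⟩⟩
      invFun := fun q => ⟨⟨(q.1 : ℕ), q.2.1⟩, q.2.2⟩
      left_inv := fun p => by rcases p with ⟨⟨ℓ, w⟩, hp⟩; rfl
      right_inv := fun q => by rcases q with ⟨⟨ℓ, hℓ⟩, w, hw⟩; rfl }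
  letI : ∀ ℓ : Fin (d + 1), Fintype {w : Fin (ℓ : ℕ) → Bool // ReplacementOutcome k d ⟨(ℓ : ℕ), w⟩} :=
    fun ℓ => Fintype.ofFinite _
  rw [N, Nat.card_congr e1, Nat.card_eq_fintype_card, Fintype.card_sigma]
  have hterm : ∀ ℓ : Fin (d + 1),
      Fintype.card {w : Fin (ℓ : ℕ) → Bool // ReplacementOutcome k d ⟨(ℓ : ℕ), w⟩}
        = (if (ℓ : ℕ) = d then A k d else 0) + (if k ≤ (ℓ : ℕ) then Cc k ((ℓ : ℕ) - 1) else 0) := by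
    intro ℓ
    rw [← Nat.card_eq_fintype_card]
    exact card_at hk (Nat.lt_succ_iff.mp ℓ.isLt)
  rw [Finset.sum_congr rfl (fun ℓ _ => hterm ℓ)]
  rw [Fin.sum_univ_eq_sum_range
    (fun ℓ => (if ℓ = d then A k d else 0) + (if k ≤ ℓ then Cc k (ℓ - 1) else 0))]
  rw [Finset.sum_add_distrib]
  congr 1
  · rw [Finset.sum_ite_eq' (Finset.range (d + 1)) d (fun _ => A k d)]
    simp
  · rw [← Finset.sum_filter]
    congr 1
    ext x
    simp only [Finset.mem_filter, Finset.mem_range, Finset.mem_Ico]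
    omega


lemma ico_sum {k d : ℕ} (hk : 1 ≤ k) (hd : k ≤ d) :
    ∑ ℓ ∈ Finset.Ico k (d + 1), Cc k (ℓ - 1)
      = 1 + ∑ j ∈ Finset.range (d - k), A k j := by
  rw [Finset.sum_eq_sum_Ico_succ_bot (by omega : k < d + 1), Cc_small (by omega : k - 1 < k),
    Finset.sum_Ico_eq_sum_range]
  congr 1
  rw [show d + 1 - (k + 1) = d - k by omega]
  apply Finset.sum_congr rfl
  intro j _
  rw [show k + 1 + j - 1 = k + j by omega, Cc_large hk (by omega), show k + j - k = j by omega]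

lemma N_formula {k d : ℕ} (hk : 1 ≤ k) (hd : k ≤ d) :
    N k d = A k d + 1 + ∑ j ∈ Finset.range (d - k), A k j := by
  rw [N_eq hk, ico_sum hk hd]; omega

lemma N_small {k d : ℕ} (hk : 1 ≤ k) (hd : d < k) : N k d = 2 ^ d := by
  rw [N_eq hk, Finset.Ico_eq_empty (by omega), Finset.sum_empty, A_small hd]
  omega

lemma N_at_k {k : ℕ} (hk : 1 ≤ k) : N k k = 2 ^ k := by
  rw [N_formula hk le_rfl, A_at_k, show k - k = 0 by omega, Finset.range_zero,
    Finset.sum_empty]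
  have := Nat.one_le_two_pow (n := k)
  omega

lemma N_rec {k d : ℕ} (hk : 1 ≤ k) (hd : k ≤ d) :
    N k (d + 1) + N k (d - k) = 2 * N k d := by
  have h1 : N k (d + 1) = A k (d + 1) + 1 + ∑ j ∈ Finset.range (d + 1 - k), A k j :=
    N_formula hk (by omega)
  rw [show d + 1 - k = (d - k) + 1 by omega, Finset.sum_range_succ] at h1
  have h2 : N k d = A k d + 1 + ∑ j ∈ Finset.range (d - k), A k j := N_formula hk hd
  have h3 : A k (d + 1) + A k (d - k) = 2 * A k d := by
    have := A_rec hk hd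
    rw [Cc_large hk hd] at this
    exact this
  by_cases hc : k ≤ d - k
  · have h4 : N k (d - k) = A k (d - k) + 1 + ∑ j ∈ Finset.range (d - k - k), A k j :=
      N_formula hk hc
    have h5 : A k (d - k) = ∑ j ∈ Finset.Ico (d - k - k) (d - k), A k j := A_ksum hk hc
    have h6 : ∑ j ∈ Finset.range (d - k), A k j
        = ∑ j ∈ Finset.range (d - k - k), A k j + ∑ j ∈ Finset.Ico (d - k - k) (d - k), A k j := by
      rw [Finset.range_eq_Ico, Finset.range_eq_Ico]
      exact (Finset.sum_Ico_consecutive _ (by omega) (by omega)).symm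
    omega
  · have h4 : N k (d - k) = 2 ^ (d - k) := N_small hk (by omega)
    have h5 : A k (d - k) = 2 ^ (d - k) := A_small (by omega)
    have h6 : A k (d - k) = 1 + ∑ j ∈ Finset.range (d - k), A k j := A_sum_small (by omega)
    omega


def term (k d i : ℕ) : ℤ := (-1) ^ i * ((d - i * k).choose i : ℤ) * 2 ^ (d - i * (k + 1))

def S (k d : ℕ) : ℤ := ∑ i ∈ Finset.range (d / (k + 1) + 1), term k d i

lemma term_zero {k d i : ℕ} (h : d < i * (k + 1)) : term k d i = 0 := by
  rcases Nat.eq_zero_or_pos i with rfl | hi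
  · simp at h
  · have hx : i * (k + 1) = i * k + i := by ring
    have hik : (d - i * k).choose i = 0 := Nat.choose_eq_zero_of_lt (by omega)
    simp [term, hik]

lemma S_ext {k d T : ℕ} (hT : d / (k + 1) + 1 ≤ T) :
    S k d = ∑ i ∈ Finset.range T, term k d i := by
  rw [S]
  apply Finset.sum_subset (Finset.range_subset_range.mpr hT)
  intro i _ hi
  apply term_zero
  have h1 : d / (k + 1) < i := by
    simp only [Finset.mem_range] at hi; omega
  exact (Nat.div_lt_iff_lt_mul (by omega)).mp h1

lemma S_small {k d : ℕ} (hd : d ≤ k) : S k d = 2 ^ d := by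
  rw [S, Nat.div_eq_of_lt (by omega), Finset.sum_range_one]
  simp [term]

lemma S_rec {k d : ℕ} (hk : 1 ≤ k) (hd : k ≤ d) :
    S k (d + 1) = 2 * S k d - S k (d - k) := by
  have key0 : term k (d + 1) 0 = 2 * term k d 0 := by
    simp [term, pow_succ]; ring
  have key : ∀ i, term k (d + 1) (i + 1) = 2 * term k d (i + 1) - term k (d - k) i := by
    intro i
    have hab : (i + 1) * (k + 1) = (i + 1) * k + (i + 1) := by ring
    have hik : (i + 1) * k = i * k + k := by ring
    have hikk : (i + 1) * (k + 1) = i * (k + 1) + (k + 1) := by ring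
    rcases lt_trichotomy ((i + 1) * (k + 1)) (d + 1) with hc | hc | hc
    · simp only [term]
      rw [show d + 1 - (i + 1) * k = (d - (i + 1) * k) + 1 by omega,
          show d + 1 - (i + 1) * (k + 1) = (d - (i + 1) * (k + 1)) + 1 by omega,
          show d - k - i * k = d - (i + 1) * k by omega,
          show d - k - i * (k + 1) = (d - (i + 1) * (k + 1)) + 1 by omega,
          Nat.choose_succ_succ]
      push_cast
      rw [pow_succ (-1 : ℤ) i, pow_succ (2 : ℤ)]
      ring
    · have h1 : d + 1 - (i + 1) * k = i + 1 := by omega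
      have h2 : d + 1 - (i + 1) * (k + 1) = 0 := by omega
      have h3 : d - k - i * k = i := by omega
      have h4 : d - k - i * (k + 1) = 0 := by omega
      have h5 : term k d (i + 1) = 0 := term_zero (by omega)
      have h6 : term k (d + 1) (i + 1) = (-1) ^ (i + 1) := by
        simp [term, h1, h2]
      have h7 : term k (d - k) i = (-1) ^ i := by
        simp [term, h3, h4]
      rw [h5, h6, h7, pow_succ]
      ring
    · rw [term_zero (show d + 1 < (i + 1) * (k + 1) by omega),
          term_zero (show d < (i + 1) * (k + 1) by omega),
          term_zero (show d - k < i * (k + 1) by omega)]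
      ring
  rw [S_ext (T := d + 2) (by have := Nat.div_le_self (d + 1) (k + 1); omega),
      S_ext (T := d + 2) (d := d) (by have := Nat.div_le_self d (k + 1); omega),
      S_ext (T := d + 1) (d := d - k) (by have := Nat.div_le_self (d - k) (k + 1); omega),
      Finset.sum_range_succ' (term k (d + 1)) (d + 1),
      Finset.sum_range_succ' (term k d) (d + 1),
      Finset.sum_congr rfl (fun i _ => key i), key0, Finset.sum_sub_distrib]
  rw [← Finset.mul_sum]
  ring


theorem N_eq_S {k : ℕ} (hk : 1 ≤ k) (d : ℕ) : (N k d : ℤ) = S k d := by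
  induction d using Nat.strong_induction_on with
  | _ d ih =>
    rcases lt_trichotomy d k with h | h | h
    · rw [N_small hk h, S_small (le_of_lt h)]; push_cast; ring
    · subst h
      rw [N_at_k hk, S_small le_rfl]; push_cast; ring
    · obtain ⟨e, rfl⟩ : ∃ e, d = e + 1 := ⟨d - 1, by omega⟩
      have hke : k ≤ e := by omega
      have hcast : (N k (e + 1) : ℤ) + (N k (e - k) : ℤ) = 2 * (N k e : ℤ) := by
        exact_mod_cast N_rec hk hke
      rw [ih e (by omega), ih (e - k) (by omega)] at hcast
      rw [S_rec hk hke]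
      linarith

end RepEggs

theorem replacement_eggs_count_alternating (k : ℕ) (hk : 1 ≤ k) (d : ℕ) :
    ((Nat.card {p : Σ ℓ : ℕ, Fin ℓ → Bool // ReplacementOutcome k d p} : ℕ) : ℤ)
        = ∑ i ∈ Finset.range (d / (k + 1) + 1),
            (-1) ^ i * ((d - i * k).choose i : ℤ) * 2 ^ (d - i * (k + 1)) ∧
    ((Nat.card {p : Σ ℓ : ℕ, Fin ℓ → Bool // ReplacementOutcome k d p} : ℕ) : ℤ) - 1
        = -1 + ∑ i ∈ Finset.range (d / (k + 1) + 1),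
            (-1) ^ i * ((d - i * k).choose i : ℤ) * 2 ^ (d - i * (k + 1)) := by
  have h1 : ((Nat.card {p : Σ ℓ : ℕ, Fin ℓ → Bool // ReplacementOutcome k d p} : ℕ) : ℤ)
      = ∑ i ∈ Finset.range (d / (k + 1) + 1),
          (-1) ^ i * ((d - i * k).choose i : ℤ) * 2 ^ (d - i * (k + 1)) :=
    RepEggs.N_eq_S hk d
  exact ⟨h1, by rw [h1]; ring⟩
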